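/- arXiv:1308.3536 — 2 statements merged into one kernel-verified Lean document; each statement's English description precedes it below -/
import Mathlib

section
/- Interval modules are indecomposable: for any shape ε with n slots and any 1 ≤ b ≤ d ≤ n, if the interval module I(b,d) is isomorphic to a direct sum V ⊕ W of zigzag modules of shape ε, then V is the zero module or W is the zero module. -/
universe u

/-- Commutativity of a square whose horizontal maps point in the direction given by `b`. -/
def zigCommute (k : Type u) [Field k] {A B A' B' : Type u}
    [AddCommGroup A] [Module k A] [AddCommGroup B] [Module k B]
    [AddCommGroup A'] [Module k A'] [AddCommGroup B'] [Module k B'] (b : Bool) :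
    cond b (A →ₗ[k] B) (B →ₗ[k] A) → cond b (A' →ₗ[k] B') (B' →ₗ[k] A') →
      (A →ₗ[k] A') → (B →ₗ[k] B') → Prop :=
  match b with
  | true => fun q q' fA fB => q'.comp fA = fB.comp q
  | false => fun q q' fA fB => fA.comp q = q'.comp fB

/-- Construct a direction-dependent map from candidates for each direction. -/
def condMk (k : Type u) [Field k] {A B : Type u}
    [AddCommGroup A] [Module k A] [AddCommGroup B] [Module k B] (b : Bool)
    (f : b = true → (A →ₗ[k] B)) (g : b = false → (B →ₗ[k] A)) :
    cond b (A →ₗ[k] B) (B →ₗ[k] A) :=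
  match b with
  | true => f rfl
  | false => g rfl

/-- A zigzag module over the field `k` with `n` slots and direction vector `ε`
(`ε i = true` means the `i`-th connecting map points forward). All slots are
finite-dimensional `k`-vector spaces. -/
structure ZigzagModule (k : Type u) [Field k] (n : ℕ) (ε : ℕ → Bool) where
  V : Fin n → Type u
  [acg : ∀ i, AddCommGroup (V i)]
  [mod : ∀ i, Module k (V i)]
  [fd : ∀ i, FiniteDimensional k (V i)]
  q : ∀ (i : ℕ) (h : i + 1 < n),
    cond (ε i) (V ⟨i, Nat.lt_of_succ_lt h⟩ →ₗ[k] V ⟨i + 1, h⟩)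
      (V ⟨i + 1, h⟩ →ₗ[k] V ⟨i, Nat.lt_of_succ_lt h⟩)

attribute [instance] ZigzagModule.acg ZigzagModule.mod ZigzagModule.fd

variable (k : Type u) [Field k] (n : ℕ) (ε : ℕ → Bool)

/-- A morphism of zigzag modules: linear maps at every slot commuting with the
connecting maps. -/
structure ZigzagHom (V W : ZigzagModule k n ε) where
  f : ∀ i, V.V i →ₗ[k] W.V i
  comm : ∀ (i : ℕ) (h : i + 1 < n),
    zigCommute k (ε i) (V.q i h) (W.q i h) (f ⟨i, Nat.lt_of_succ_lt h⟩) (f ⟨i + 1, h⟩)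

/-- An isomorphism of zigzag modules: linear equivalences at every slot commuting
with the connecting maps. -/
structure ZigzagIso (V W : ZigzagModule k n ε) where
  f : ∀ i, V.V i ≃ₗ[k] W.V i
  comm : ∀ (i : ℕ) (h : i + 1 < n),
    zigCommute k (ε i) (V.q i h) (W.q i h) (f ⟨i, Nat.lt_of_succ_lt h⟩).toLinearMap
      (f ⟨i + 1, h⟩).toLinearMap

/-- Direction-dependent product of two connecting maps. -/
def condProdMap {A B A' B' : Type u}
    [AddCommGroup A] [Module k A] [AddCommGroup B] [Module k B]
    [AddCommGroup A'] [Module k A'] [AddCommGroup B'] [Module k B'] (b : Bool) :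
    cond b (A →ₗ[k] B) (B →ₗ[k] A) → cond b (A' →ₗ[k] B') (B' →ₗ[k] A') →
      cond b ((A × A') →ₗ[k] (B × B')) ((B × B') →ₗ[k] (A × A')) :=
  match b with
  | true => fun q q' => q.prodMap q'
  | false => fun q q' => q.prodMap q'

/-- Slotwise direct sum of two zigzag modules. -/
def ZigzagModule.dsum (V W : ZigzagModule k n ε) : ZigzagModule k n ε where
  V i := V.V i × W.V i
  q i h := condProdMap k (ε i) (V.q i h) (W.q i h)

/-- The zero zigzag module. -/
def ZigzagModule.zero : ZigzagModule k n ε where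
  V _ := PUnit
  q i h := condMk k (ε i) (fun _ => 0) (fun _ => 0)

/-- Finite direct sum of zigzag modules. -/
def ZigzagModule.finDSum : (N : ℕ) → (Fin N → ZigzagModule k n ε) → ZigzagModule k n ε
  | 0, _ => ZigzagModule.zero k n ε
  | N + 1, M => ZigzagModule.dsum k n ε (M 0) (ZigzagModule.finDSum N (fun l => M l.succ))

/-- The `i`-th slot of the interval module `I(b,d)` (slots are numbered `1,…,n`,
so the slot of index `i : Fin n` is slot `i+1`): it is (a copy of) `k` for
`b ≤ i+1 ≤ d` and `0` otherwise. -/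
def intervalSub (b d i : ℕ) : Submodule k k :=
  if b ≤ i + 1 ∧ i + 1 ≤ d then ⊤ else ⊥

/-- Forward connecting map of the interval module: the identity between two
adjacent copies of `k`, and zero otherwise. -/
noncomputable def intervalMapF (b d i : ℕ) :
    intervalSub k b d i →ₗ[k] intervalSub k b d (i + 1) :=
  if h : (b ≤ i + 1 ∧ i + 1 ≤ d) ∧ (b ≤ i + 2 ∧ i + 2 ≤ d) then
    (LinearMap.id (R := k) (M := k)).restrict
      (fun x _ => by
        unfold intervalSub
        rw [if_pos (show b ≤ i + 1 + 1 ∧ i + 1 + 1 ≤ d from h.2)]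
        exact Submodule.mem_top)
  else 0

/-- Backward connecting map of the interval module: the identity between two
adjacent copies of `k`, and zero otherwise. -/
noncomputable def intervalMapB (b d i : ℕ) :
    intervalSub k b d (i + 1) →ₗ[k] intervalSub k b d i :=
  if h : (b ≤ i + 1 ∧ i + 1 ≤ d) ∧ (b ≤ i + 2 ∧ i + 2 ≤ d) then
    (LinearMap.id (R := k) (M := k)).restrict
      (fun x _ => by
        unfold intervalSub
        rw [if_pos (show b ≤ i + 1 ∧ i + 1 ≤ d from h.1)]
        exact Submodule.mem_top)
  else 0

/-- The interval module `I(b,d)` of shape `ε`. -/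
noncomputable def intervalModule (b d : ℕ) : ZigzagModule k n ε where
  V i := intervalSub k b d i.1
  q i h := condMk k (ε i) (fun _ => intervalMapF k b d i) (fun _ => intervalMapB k b d i)

section Aux

variable {k}

/-- Direction-dependent bijectivity predicate. -/
def condBij {A B : Type u}
    [AddCommGroup A] [Module k A] [AddCommGroup B] [Module k B] (b : Bool) :
    cond b (A →ₗ[k] B) (B →ₗ[k] A) → Prop :=
  match b with
  | true => fun q => Function.Bijective (DFunLike.coe (F := A →ₗ[k] B) q)
  | false => fun q => Function.Bijective (DFunLike.coe (F := B →ₗ[k] A) q)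

lemma condBij_condMk {A B : Type u}
    [AddCommGroup A] [Module k A] [AddCommGroup B] [Module k B] (bb : Bool)
    (f : bb = true → (A →ₗ[k] B)) (g : bb = false → (B →ₗ[k] A))
    (hf : ∀ h, Function.Bijective (f h)) (hg : ∀ h, Function.Bijective (g h)) :
    condBij bb (condMk k bb f g) := by
  cases bb
  · exact hg rfl
  · exact hf rfl

lemma zigCommute_bij {A B A' B' : Type u}
    [AddCommGroup A] [Module k A] [AddCommGroup B] [Module k B]
    [AddCommGroup A'] [Module k A'] [AddCommGroup B'] [Module k B'] (bb : Bool)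
    (q : cond bb (A →ₗ[k] B) (B →ₗ[k] A)) (q' : cond bb (A' →ₗ[k] B') (B' →ₗ[k] A'))
    (eA : A ≃ₗ[k] A') (eB : B ≃ₗ[k] B')
    (hc : zigCommute k bb q q' eA.toLinearMap eB.toLinearMap)
    (hq : condBij bb q) : condBij bb q' := by
  cases bb
  · -- false : eA ∘ q = q' ∘ eB, q : B →ₗ[k] A
    have hq0 : Function.Bijective (DFunLike.coe (F := B →ₗ[k] A) q) := hq
    have hc0 : eA.toLinearMap ∘ₗ (show B →ₗ[k] A from q) =
        (show B' →ₗ[k] A' from q') ∘ₗ eB.toLinearMap := hc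
    have hfun : DFunLike.coe (F := B' →ₗ[k] A') q' =
        ⇑eA ∘ DFunLike.coe (F := B →ₗ[k] A) q ∘ ⇑eB.symm := by
      funext x
      have := LinearMap.congr_fun hc0 (eB.symm x)
      simpa using this.symm
    show Function.Bijective (DFunLike.coe (F := B' →ₗ[k] A') q')
    rw [hfun]
    exact eA.bijective.comp (hq0.comp eB.symm.bijective)
  · -- true : q' ∘ eA = eB ∘ q
    have hq0 : Function.Bijective (DFunLike.coe (F := A →ₗ[k] B) q) := hq
    have hc0 : (show A' →ₗ[k] B' from q') ∘ₗ eA.toLinearMap =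
        eB.toLinearMap ∘ₗ (show A →ₗ[k] B from q) := hc
    have hfun : DFunLike.coe (F := A' →ₗ[k] B') q' =
        ⇑eB ∘ DFunLike.coe (F := A →ₗ[k] B) q ∘ ⇑eA.symm := by
      funext x
      have := LinearMap.congr_fun hc0 (eA.symm x)
      simpa using this
    show Function.Bijective (DFunLike.coe (F := A' →ₗ[k] B') q')
    rw [hfun]
    exact eB.bijective.comp (hq0.comp eA.symm.bijective)

lemma bij_of_prodMap_bij {A B A' B' : Type u}
    [AddCommGroup A] [Module k A] [AddCommGroup B] [Module k B]
    [AddCommGroup A'] [Module k A'] [AddCommGroup B'] [Module k B']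
    (f : A →ₗ[k] B) (g : A' →ₗ[k] B')
    (h : Function.Bijective (f.prodMap g)) : Function.Bijective f := by
  constructor
  · intro x y hxy
    have := h.1 (a₁ := (x, 0)) (a₂ := (y, 0)) (by simp [LinearMap.prodMap_apply, hxy])
    exact (Prod.ext_iff.1 this).1
  · intro c
    obtain ⟨⟨a, a'⟩, hp⟩ := h.2 (c, g 0)
    refine ⟨a, ?_⟩
    have := (Prod.ext_iff.1 hp).1
    simpa [LinearMap.prodMap_apply] using this

lemma condProd_bij_equiv {A B A' B' : Type u}
    [AddCommGroup A] [Module k A] [AddCommGroup B] [Module k B]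
    [AddCommGroup A'] [Module k A'] [AddCommGroup B'] [Module k B'] (bb : Bool)
    (qA : cond bb (A →ₗ[k] B) (B →ₗ[k] A)) (qA' : cond bb (A' →ₗ[k] B') (B' →ₗ[k] A'))
    (h : condBij bb (condProdMap k bb qA qA')) : Nonempty (A ≃ₗ[k] B) := by
  cases bb
  · have h0 : Function.Bijective
        ((show B →ₗ[k] A from qA).prodMap (show B' →ₗ[k] A' from qA')) := h
    exact ⟨(LinearEquiv.ofBijective _
      (bij_of_prodMap_bij (show B →ₗ[k] A from qA) (show B' →ₗ[k] A' from qA') h0)).symm⟩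
  · have h0 : Function.Bijective
        ((show A →ₗ[k] B from qA).prodMap (show A' →ₗ[k] B' from qA')) := h
    exact ⟨LinearEquiv.ofBijective _
      (bij_of_prodMap_bij (show A →ₗ[k] B from qA) (show A' →ₗ[k] B' from qA') h0)⟩

lemma intervalMapF_bij (b d i : ℕ) (h1 : b ≤ i + 1 ∧ i + 1 ≤ d)
    (h2 : b ≤ i + 2 ∧ i + 2 ≤ d) : Function.Bijective (intervalMapF k b d i) := by
  rw [intervalMapF, dif_pos ⟨h1, h2⟩]
  constructor
  · intro x y hxy
    have := congrArg Subtype.val hxy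
    simpa [LinearMap.restrict_apply] using Subtype.ext this
  · intro y
    refine ⟨⟨y.1, ?_⟩, ?_⟩
    · unfold intervalSub
      rw [if_pos h1]
      exact Submodule.mem_top
    · exact Subtype.ext (by simp [LinearMap.restrict_apply])

lemma intervalMapB_bij (b d i : ℕ) (h1 : b ≤ i + 1 ∧ i + 1 ≤ d)
    (h2 : b ≤ i + 2 ∧ i + 2 ≤ d) : Function.Bijective (intervalMapB k b d i) := by
  rw [intervalMapB, dif_pos ⟨h1, h2⟩]
  constructor
  · intro x y hxy
    have := congrArg Subtype.val hxy
    simpa [LinearMap.restrict_apply] using Subtype.ext this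
  · intro y
    refine ⟨⟨y.1, ?_⟩, ?_⟩
    · unfold intervalSub
      rw [if_pos (show b ≤ i + 1 + 1 ∧ i + 1 + 1 ≤ d from h2)]
      exact Submodule.mem_top
    · exact Subtype.ext (by simp [LinearMap.restrict_apply])

lemma finrank_intervalSub (b d i : ℕ) :
    Module.finrank k (intervalSub k b d i) = if b ≤ i + 1 ∧ i + 1 ≤ d then 1 else 0 := by
  by_cases hcond : b ≤ i + 1 ∧ i + 1 ≤ d
  · have hS : intervalSub k b d i = ⊤ := by rw [intervalSub, if_pos hcond]
    rw [if_pos hcond, hS, finrank_top, Module.finrank_self]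
  · have hS : intervalSub k b d i = ⊥ := by rw [intervalSub, if_neg hcond]
    rw [if_neg hcond, hS]
    exact finrank_bot k k

end Aux

/-- **Interval modules are indecomposable.**
For any shape `ε` with `n` slots and any `1 ≤ b ≤ d ≤ n`, if the interval module
`I(b,d)` is isomorphic to a direct sum `V ⊕ W` of zigzag modules of shape `ε`,
then `V` is the zero module or `W` is the zero module (every slot is the zero
vector space). -/
theorem intervalModule_indecomposable (k : Type u) [Field k] (n : ℕ) (ε : ℕ → Bool)
    (b d : ℕ) (hb : 1 ≤ b) (hbd : b ≤ d) (hd : d ≤ n)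
    (V W : ZigzagModule k n ε)
    (h : Nonempty (ZigzagIso k n ε (intervalModule k n ε b d)
      (ZigzagModule.dsum k n ε V W))) :
    (∀ i, Subsingleton (V.V i)) ∨ (∀ i, Subsingleton (W.V i)) := by
  obtain ⟨e⟩ := h
  -- dimension count at each slot
  have hdim : ∀ i : Fin n, Module.finrank k (V.V i) + Module.finrank k (W.V i) =
      if b ≤ i.1 + 1 ∧ i.1 + 1 ≤ d then 1 else 0 := by
    intro i
    have h2 : Module.finrank k (intervalSub k b d i.1) =
        Module.finrank k (V.V i × W.V i) := (e.f i).finrank_eq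
    rw [Module.finrank_prod, finrank_intervalSub] at h2
    exact h2.symm
  have hbn : b - 1 < n := by omega
  -- one step of propagation inside the interval
  have step : ∀ (m : ℕ) (hm1 : b ≤ m + 1) (hm2 : m + 2 ≤ d),
      Module.finrank k (V.V ⟨m, by omega⟩) = Module.finrank k (V.V ⟨m + 1, by omega⟩) := by
    intro m hm1 hm2
    have hn1 : m + 1 < n := by omega
    have hc := e.comm m hn1
    have hbijI : condBij (ε m) ((intervalModule k n ε b d).q m hn1) := by
      refine condBij_condMk (ε m) _ _ (fun _ => ?_) (fun _ => ?_)
      · exact intervalMapF_bij b d m ⟨hm1, by omega⟩ ⟨by omega, hm2⟩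
      · exact intervalMapB_bij b d m ⟨hm1, by omega⟩ ⟨by omega, hm2⟩
    have hbijD : condBij (ε m) ((ZigzagModule.dsum k n ε V W).q m hn1) :=
      zigCommute_bij (ε m) _ _ (e.f ⟨m, by omega⟩) (e.f ⟨m + 1, hn1⟩) hc hbijI
    obtain ⟨eq⟩ := condProd_bij_equiv (ε m) (V.q m hn1) (W.q m hn1) hbijD
    exact eq.finrank_eq
  -- chain within the interval back to slot b - 1
  have chain : ∀ (m : ℕ) (hm1 : b ≤ m + 1) (hm2 : m + 1 ≤ d),
      Module.finrank k (V.V ⟨m, by omega⟩) = Module.finrank k (V.V ⟨b - 1, hbn⟩) := by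
    intro m
    induction m with
    | zero =>
      intro hm1 hm2
      exact congrArg (fun t => Module.finrank k (V.V t)) (Fin.mk_eq_mk.mpr (by omega))
    | succ m ih =>
      intro hm1 hm2
      by_cases hbm : b ≤ m + 1
      · rw [← step m hbm hm2]
        exact ih hbm (by omega)
      · exact congrArg (fun t => Module.finrank k (V.V t)) (Fin.mk_eq_mk.mpr (by omega))
  by_cases hV : ∀ i, Module.finrank k (V.V i) = 0
  · exact Or.inl fun i => (Module.finrank_zero_iff (R := k)).mp (hV i)
  · push_neg at hV
    obtain ⟨i0, hi0⟩ := hV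
    have hd0 := hdim i0
    have hin0 : b ≤ i0.1 + 1 ∧ i0.1 + 1 ≤ d := by
      by_contra hcon
      rw [if_neg hcon] at hd0
      omega
    rw [if_pos hin0] at hd0
    have hV1 : Module.finrank k (V.V ⟨b - 1, hbn⟩) = 1 := by
      have := chain i0.1 hin0.1 hin0.2
      have hi0e : (⟨i0.1, by omega⟩ : Fin n) = i0 := Fin.ext rfl
      rw [hi0e] at this
      omega
    refine Or.inr fun i => (Module.finrank_zero_iff (R := k)).mp ?_
    have hdi := hdim i
    by_cases hin : b ≤ i.1 + 1 ∧ i.1 + 1 ≤ d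
    · rw [if_pos hin] at hdi
      have := chain i.1 hin.1 hin.2
      have hie : (⟨i.1, by omega⟩ : Fin n) = i := Fin.ext rfl
      rw [hie] at this
      omega
    · rw [if_neg hin] at hdi
      omega
end

section
/- The Čech complex is sandwiched between two Vietoris–Rips complexes: let d ≥ 1 and let σ be a finite nonempty subset of ℝ^d. (i) If the diameter of σ is at most 2·√((d+1)/(2d)), then there exists a point c ∈ ℝ^d with ‖x − c‖ ≤ 1 for every x ∈ σ, i.e., the closed unit balls centered at the points of σ have a common point. (ii) Conversely, if the closed unit balls centered at the points of σ have a common point, then the diameter of σ is at most 2. Consequently, for any finite S ⊂ ℝ^d, the Vietoris–Rips complex at scale ε = √((d+1)/(2d)) is contained in the Čech complex of unit balls, which is contained in the Vietoris–Rips complex at scale ε = 1. -/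
open Finset Module

local notation "⟪" x ", " y "⟫" => @inner ℝ _ _ x y

/-- Existence of an enclosing ball whose center lies in the convex hull of the
points at maximal distance. -/
lemma exists_min_center {E : Type*} [NormedAddCommGroup E] [InnerProductSpace ℝ E]
    [FiniteDimensional ℝ E] (σ : Finset E) (hσ : σ.Nonempty) :
    ∃ (c : E) (r : ℝ), 0 ≤ r ∧ (∀ x ∈ σ, dist x c ≤ r) ∧
      c ∈ convexHull ℝ {x : E | x ∈ σ ∧ dist x c = r} := by
  classical
  set f : E → ℝ := fun c => σ.sup' hσ (fun x => dist x c) with hfdef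
  obtain ⟨x0, hx0⟩ := hσ
  have key : ∀ a b : E, f a ≤ f b + dist a b := by
    intro a b
    refine Finset.sup'_le _ _ fun x hx => (dist_triangle x b a).trans ?_
    exact add_le_add (Finset.le_sup' (fun y => dist y b) hx) (dist_comm b a).le
  have hfcont : Continuous f := by
    refine (LipschitzWith.of_dist_le_mul (K := 1) fun a b => ?_).continuous
    rw [NNReal.coe_one, one_mul, Real.dist_eq, abs_sub_le_iff]
    constructor
    · linarith [key a b]
    · linarith [key b a, dist_comm a b]
  have hfx0 : 0 ≤ f x0 := le_trans dist_nonneg (Finset.le_sup' (fun y => dist y x0) hx0)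
  have hball : (Metric.closedBall x0 (f x0)).Nonempty :=
    ⟨x0, Metric.mem_closedBall_self hfx0⟩
  obtain ⟨c, hcball, hcmin⟩ := (isCompact_closedBall x0 (f x0)).exists_isMinOn hball
    hfcont.continuousOn
  have hglobal : ∀ c', f c ≤ f c' := by
    intro c'
    by_cases h : c' ∈ Metric.closedBall x0 (f x0)
    · exact hcmin h
    · have h1 : f x0 < dist c' x0 := by
        simpa [Metric.mem_closedBall] using h
      have h2 : dist x0 c' ≤ f c' := Finset.le_sup' (fun y => dist y c') hx0
      have h3 : f c ≤ f x0 := hcmin (Metric.mem_closedBall_self hfx0)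
      rw [dist_comm] at h1
      linarith
  set r : ℝ := f c with hrdef
  have hr0 : 0 ≤ r := le_trans dist_nonneg (Finset.le_sup' (fun y => dist y c) hx0)
  have hle : ∀ x ∈ σ, dist x c ≤ r := fun x hx => Finset.le_sup' (fun y => dist y c) hx
  refine ⟨c, r, hr0, hle, ?_⟩
  by_contra hc
  set Tf : Finset E := σ.filter (fun x => dist x c = r) with hTf
  have hTset : {x : E | x ∈ σ ∧ dist x c = r} = (↑Tf : Set E) := by
    ext x; simp [hTf]
  rw [hTset] at hc
  obtain ⟨y, hyσ, hy⟩ := Finset.exists_mem_eq_sup' ⟨x0, hx0⟩ (fun x => dist x c)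
  have hyT : y ∈ Tf := by simp [hTf, hyσ, hy.symm]; rfl
  set K : Set E := convexHull ℝ (↑Tf : Set E) with hK
  have hKconv : Convex ℝ K := convex_convexHull _ _
  have hKcompact : IsCompact K := Tf.finite_toSet.isCompact_convexHull (𝕜 := ℝ)
  have hKcomplete : IsComplete K := hKcompact.isClosed.isComplete
  have hKne : K.Nonempty := ⟨y, subset_convexHull _ _ hyT⟩
  obtain ⟨p, hpK, hproj⟩ := exists_norm_eq_iInf_of_complete_convex hKne hKcomplete hKconv c
  have hinner : ∀ w ∈ K, ⟪c - p, w - p⟫ ≤ 0 :=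
    (norm_eq_iInf_iff_real_inner_le_zero hKconv hpK).mp hproj
  set v : E := p - c with hv
  have hvne : v ≠ 0 := by
    rw [hv, sub_ne_zero]
    rintro rfl
    exact hc hpK
  have hvpos : (0:ℝ) < ‖v‖ := norm_pos_iff.mpr hvne
  have hlow : ∀ x ∈ Tf, ‖v‖ ^ 2 ≤ ⟪x - c, v⟫ := by
    intro x hx
    have hxK : x ∈ K := subset_convexHull _ _ (by exact_mod_cast hx)
    have h1 : ⟪c - p, x - p⟫ ≤ 0 := hinner x hxK
    have e1 : x - c = (x - p) + v := by rw [hv]; abel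
    have e2 : ⟪x - c, v⟫ = ⟪x - p, v⟫ + ⟪v, v⟫ := by rw [e1, inner_add_left]
    have e3 : ⟪x - p, v⟫ = -⟪c - p, x - p⟫ := by
      rw [hv, show p - c = -(c - p) by abel, inner_neg_right, real_inner_comm]
    have e4 : ⟪v, v⟫ = ‖v‖ ^ 2 := real_inner_self_eq_norm_sq v
    rw [e2, e3, e4]; linarith
  -- choose step size
  set g : E → ℝ := fun x => if dist x c = r then 1 else (r - dist x c) / ‖v‖ with hg
  have hgpos : ∀ x ∈ σ, 0 < g x := by
    intro x hx
    by_cases h : dist x c = r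
    · simp [hg, h]
    · have : dist x c < r := lt_of_le_of_ne (hle x hx) h
      simp only [hg, if_neg h]
      exact div_pos (by linarith) hvpos
  set t : ℝ := min 1 (σ.inf' ⟨x0, hx0⟩ g) / 2 with ht
  have htpos : 0 < t := by
    apply div_pos _ two_pos
    apply lt_min one_pos
    refine (Finset.lt_inf'_iff (H := _)).2 ?_
    exact fun x hx => hgpos x hx
  have htle : t ≤ 1 / 2 := by
    have := min_le_left 1 (σ.inf' ⟨x0, hx0⟩ g)
    rw [ht]; linarith
  have hcontr : f (c + t • v) < r := by
    rw [hfdef]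
    refine (Finset.sup'_lt_iff (H := _)).2 ?_
    intro x hx
    by_cases hxr : dist x c = r
    · -- x is a farthest point : use the inner product bound
      have hxT : x ∈ Tf := by simp [hTf, hx, hxr]
      have hl := hlow x hxT
      have hdq : dist x (c + t • v) ^ 2 = ‖x - c‖ ^ 2 - 2 * (t * ⟪x - c, v⟫) + t ^ 2 * ‖v‖ ^ 2 := by
        rw [dist_eq_norm, show x - (c + t • v) = (x - c) - t • v by abel,
          norm_sub_sq_real, real_inner_smul_right, norm_smul, mul_pow]
        simp [Real.norm_eq_abs, sq_abs]
      have hxc : ‖x - c‖ = r := by rw [← dist_eq_norm, hxr]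
      have hb1 : 2 * (t * ‖v‖ ^ 2) ≤ 2 * (t * ⟪x - c, v⟫) := by
        have := mul_le_mul_of_nonneg_left hl htpos.le
        linarith
      have hb2 : t ^ 2 * ‖v‖ ^ 2 ≤ (t / 2) * ‖v‖ ^ 2 := by
        have h22 : t * t ≤ t * (1 / 2) := mul_le_mul_of_nonneg_left htle htpos.le
        have := mul_le_mul_of_nonneg_right h22 (sq_nonneg ‖v‖)
        nlinarith [sq_nonneg ‖v‖]
      have hb3 : 0 < t * ‖v‖ ^ 2 := mul_pos htpos (pow_pos hvpos 2)
      have hsq : dist x (c + t • v) ^ 2 < r ^ 2 := by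
        rw [hdq, hxc]
        nlinarith
      exact lt_of_pow_lt_pow_left₀ 2 hr0 hsq
    · -- x is strictly inside : step is small enough
      have hxlt : dist x c < r := lt_of_le_of_ne (hle x hx) hxr
      have hstep : dist c (c + t • v) = t * ‖v‖ := by
        rw [dist_eq_norm, show c - (c + t • v) = -(t • v) by abel, norm_neg, norm_smul]
        simp [Real.norm_eq_abs, abs_of_pos htpos]
      have h1 : dist x (c + t • v) ≤ dist x c + t * ‖v‖ := by
        have := dist_triangle x c (c + t • v)
        rw [hstep] at this; exact this
      have h2 : t ≤ (r - dist x c) / ‖v‖ / 2 := by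
        have hi : σ.inf' ⟨x0, hx0⟩ g ≤ g x := Finset.inf'_le g hx
        have hgx : g x = (r - dist x c) / ‖v‖ := by simp [hg, hxr]
        rw [hgx] at hi
        have hm := min_le_right (1:ℝ) (σ.inf' ⟨x0, hx0⟩ g)
        rw [ht]; linarith
      have h3 : t * ‖v‖ ≤ (r - dist x c) / 2 := by
        have hh := mul_le_mul_of_nonneg_right h2 hvpos.le
        have he : (r - dist x c) / ‖v‖ / 2 * ‖v‖ = (r - dist x c) / 2 := by
          field_simp
        rw [he] at hh
        linarith
      linarith
  exact absurd (hglobal (c + t • v)) (not_le.mpr hcontr)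

/-- The key Jung inequality: if `c` lies in the convex hull of points of `σ`
at distance exactly `r` from `c`, and `σ` has diameter at most `D`, then
`2 r² (n+1) ≤ D² n` where `n = dim`. -/
lemma jung_bound {E : Type*} [NormedAddCommGroup E] [InnerProductSpace ℝ E]
    [FiniteDimensional ℝ E] {σ : Finset E} {c : E} {r D : ℝ} (hD : 0 ≤ D)
    (hdiam : ∀ x ∈ σ, ∀ y ∈ σ, dist x y ≤ D)
    (hc : c ∈ convexHull ℝ {x : E | x ∈ σ ∧ dist x c = r}) :
    2 * r ^ 2 * (finrank ℝ E + 1) ≤ D ^ 2 * finrank ℝ E := by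
  classical
  obtain ⟨ι, fι, z, w, hrange, hindep, hwpos, hwsum, hwz⟩ :=
    eq_pos_convex_span_of_mem_convexHull hc
  have hz : ∀ i, z i ∈ σ ∧ dist (z i) c = r := fun i => hrange (Set.mem_range_self i)
  set n : ℕ := finrank ℝ E with hn
  -- cardinality bound
  have hcard : (Fintype.card ι : ℝ) ≤ n + 1 := by
    have h1 := hindep.card_le_finrank_succ
    have h2 : finrank ℝ (vectorSpan ℝ (Set.range z)) ≤ n := Submodule.finrank_le _
    exact_mod_cast h1.trans (by omega)
  have hne : Nonempty ι := by
    by_contra h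
    rw [not_nonempty_iff] at h
    simp [Finset.univ_eq_empty] at hwsum
  have hcard1 : (1:ℝ) ≤ Fintype.card ι := by exact_mod_cast Fintype.card_pos
  -- zero moment
  have h0 : ∑ i, w i • (z i - c) = 0 := by
    simp only [smul_sub, Finset.sum_sub_distrib, ← Finset.sum_smul, hwsum, hwz, one_smul,
      sub_self]
  -- key identity
  have key : ∀ j, ∑ i, w i * dist (z i) (z j) ^ 2 = 2 * r ^ 2 := by
    intro j
    have hip : ∑ i, w i * ⟪z i - c, z j - c⟫ = 0 := by
      have : ⟪∑ i, w i • (z i - c), z j - c⟫ = (0:ℝ) := by rw [h0, inner_zero_left]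
      rw [sum_inner] at this
      simpa [real_inner_smul_left] using this
    have hterm : ∀ i, w i * dist (z i) (z j) ^ 2
        = w i * (2 * r ^ 2) - 2 * (w i * ⟪z i - c, z j - c⟫) := by
      intro i
      have e1 : dist (z i) (z j) ^ 2 = 2 * r ^ 2 - 2 * ⟪z i - c, z j - c⟫ := by
        rw [dist_eq_norm, show z i - z j = (z i - c) - (z j - c) by abel, norm_sub_sq_real]
        have hi : ‖z i - c‖ = r := by rw [← dist_eq_norm]; exact (hz i).2
        have hj : ‖z j - c‖ = r := by rw [← dist_eq_norm]; exact (hz j).2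
        rw [hi, hj]; ring
      rw [e1]; ring
    rw [Finset.sum_congr rfl (fun i _ => hterm i), Finset.sum_sub_distrib,
      ← Finset.sum_mul, ← Finset.mul_sum, hwsum, hip]
    ring
  -- per-index bound : 2 r² ≤ (1 - w j) D²
  have bound : ∀ j, 2 * r ^ 2 ≤ (1 - w j) * D ^ 2 := by
    intro j
    have e0 : ∑ i ∈ Finset.univ.erase j, w i * dist (z i) (z j) ^ 2 = 2 * r ^ 2 := by
      rw [← key j, ← Finset.sum_erase_add _ _ (Finset.mem_univ j)]
      simp [dist_self]
    have e1 : ∑ i ∈ Finset.univ.erase j, w i * dist (z i) (z j) ^ 2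
        ≤ ∑ i ∈ Finset.univ.erase j, w i * D ^ 2 := by
      refine Finset.sum_le_sum fun i _ => ?_
      refine mul_le_mul_of_nonneg_left ?_ (hwpos i).le
      exact pow_le_pow_left₀ dist_nonneg (hdiam _ (hz i).1 _ (hz j).1) 2
    have e2 : ∑ i ∈ Finset.univ.erase j, w i * D ^ 2 = (1 - w j) * D ^ 2 := by
      rw [← Finset.sum_mul]
      have : ∑ i ∈ Finset.univ.erase j, w i = 1 - w j := by
        have := Finset.sum_erase_add Finset.univ w (Finset.mem_univ j)
        rw [hwsum] at this
        linarith
      rw [this]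
    rw [← e0]; rw [e2] at e1; exact e1
  -- sum the bounds against w
  have S2 : ℝ := ∑ j, w j ^ 2
  have summed : 2 * r ^ 2 ≤ D ^ 2 * (1 - ∑ j, w j ^ 2) := by
    have h1 : ∑ j, w j * (2 * r ^ 2) ≤ ∑ j, w j * ((1 - w j) * D ^ 2) :=
      Finset.sum_le_sum fun j _ => mul_le_mul_of_nonneg_left (bound j) (hwpos j).le
    have h2 : ∑ j, w j * (2 * r ^ 2) = 2 * r ^ 2 := by
      rw [← Finset.sum_mul, hwsum, one_mul]
    have h3 : ∑ j, w j * ((1 - w j) * D ^ 2) = D ^ 2 * (1 - ∑ j, w j ^ 2) := by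
      have : ∀ j, w j * ((1 - w j) * D ^ 2) = w j * D ^ 2 - D ^ 2 * w j ^ 2 := by
        intro j; ring
      rw [Finset.sum_congr rfl (fun j _ => this j), Finset.sum_sub_distrib,
        ← Finset.sum_mul, hwsum, ← Finset.mul_sum]
      ring
    rw [h2, h3] at h1; exact h1
  -- Cauchy–Schwarz
  have cs : (1:ℝ) ≤ (Fintype.card ι : ℝ) * ∑ j, w j ^ 2 := by
    have := sq_sum_le_card_mul_sum_sq (s := (Finset.univ : Finset ι)) (f := w)
    rw [hwsum] at this
    simpa using this
  have hS2 : 0 ≤ ∑ j, w j ^ 2 := Finset.sum_nonneg fun j _ => sq_nonneg _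
  have hD2 : 0 ≤ D ^ 2 := sq_nonneg D
  -- combine : (1 - S2)(n+1) ≤ n since S2 (n+1) ≥ S2 * card ≥ 1
  have hfin : (1 - ∑ j, w j ^ 2) * (n + 1) ≤ n := by
    have h4 : (1:ℝ) ≤ (n + 1) * ∑ j, w j ^ 2 := by
      calc (1:ℝ) ≤ (Fintype.card ι : ℝ) * ∑ j, w j ^ 2 := cs
      _ ≤ (n + 1) * ∑ j, w j ^ 2 := mul_le_mul_of_nonneg_right hcard hS2
    nlinarith
  have hnn : (0:ℝ) ≤ (n:ℝ) + 1 := by positivity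
  calc 2 * r ^ 2 * (n + 1) ≤ D ^ 2 * (1 - ∑ j, w j ^ 2) * (n + 1) := by
        exact mul_le_mul_of_nonneg_right summed hnn
  _ = D ^ 2 * ((1 - ∑ j, w j ^ 2) * (n + 1)) := by ring
  _ ≤ D ^ 2 * n := mul_le_mul_of_nonneg_left hfin hD2


/-- The Vietoris–Rips complex at scale `ε` of a finite set `S ⊆ ℝ^d`: the
finite nonempty subsets of `S` of diameter at most `2ε`. -/
def vietorisRips (d : ℕ) (S : Finset (EuclideanSpace ℝ (Fin d))) (ε : ℝ) :
    Set (Finset (EuclideanSpace ℝ (Fin d))) :=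
  {σ | σ ⊆ S ∧ σ.Nonempty ∧ ∀ x ∈ σ, ∀ y ∈ σ, dist x y ≤ 2 * ε}

/-- The Čech complex of unit balls on a finite set `S ⊆ ℝ^d`: the finite
nonempty subsets of `S` whose closed unit balls have a common point. -/
def cechComplex (d : ℕ) (S : Finset (EuclideanSpace ℝ (Fin d))) :
    Set (Finset (EuclideanSpace ℝ (Fin d))) :=
  {σ | σ ⊆ S ∧ σ.Nonempty ∧ ∃ c, ∀ x ∈ σ, dist x c ≤ 1}

/-- **The Čech complex is sandwiched between two Vietoris–Rips complexes**
(via Jung's theorem). (i) A finite nonempty set in `ℝ^d` of diameter at most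
`2·√((d+1)/(2d))` is contained in some closed unit ball; (ii) conversely a
finite nonempty set contained in a closed unit ball has diameter at most `2`;
consequently `VR(S, √((d+1)/(2d))) ⊆ Čech(S) ⊆ VR(S, 1)` for every finite
`S ⊆ ℝ^d`. -/
theorem cech_between_vietorisRips (d : ℕ) (hd : 1 ≤ d) :
    (∀ σ : Finset (EuclideanSpace ℝ (Fin d)), σ.Nonempty →
      (∀ x ∈ σ, ∀ y ∈ σ, dist x y ≤ 2 * Real.sqrt ((d + 1) / (2 * d))) →
      ∃ c : EuclideanSpace ℝ (Fin d), ∀ x ∈ σ, dist x c ≤ 1) ∧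
    (∀ σ : Finset (EuclideanSpace ℝ (Fin d)), σ.Nonempty →
      (∃ c : EuclideanSpace ℝ (Fin d), ∀ x ∈ σ, dist x c ≤ 1) →
      ∀ x ∈ σ, ∀ y ∈ σ, dist x y ≤ 2) ∧
    (∀ S : Finset (EuclideanSpace ℝ (Fin d)),
      vietorisRips d S (Real.sqrt ((d + 1) / (2 * d))) ⊆ cechComplex d S ∧
      cechComplex d S ⊆ vietorisRips d S 1) := by
  have hdpos : (0:ℝ) < d := by exact_mod_cast Nat.lt_of_lt_of_le Nat.zero_lt_one hd
  have hval : (0:ℝ) ≤ ((d:ℝ) + 1) / (2 * d) := by positivity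
  have part1 : ∀ σ : Finset (EuclideanSpace ℝ (Fin d)), σ.Nonempty →
      (∀ x ∈ σ, ∀ y ∈ σ, dist x y ≤ 2 * Real.sqrt ((d + 1) / (2 * d))) →
      ∃ c : EuclideanSpace ℝ (Fin d), ∀ x ∈ σ, dist x c ≤ 1 := by
    intro σ hσ hdiam
    obtain ⟨c, r, hr0, hle, hc⟩ := exists_min_center σ hσ
    have hD0 : (0:ℝ) ≤ 2 * Real.sqrt (((d:ℝ) + 1) / (2 * d)) := by positivity
    have hb := jung_bound hD0 hdiam hc
    rw [finrank_euclideanSpace_fin] at hb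
    have hD2 : (2 * Real.sqrt (((d:ℝ) + 1) / (2 * d))) ^ 2 = 2 * ((d:ℝ) + 1) / d := by
      rw [mul_pow, Real.sq_sqrt hval]
      field_simp
    rw [hD2] at hb
    have hbb : 2 * r ^ 2 * ((d:ℝ) + 1) ≤ 2 * ((d:ℝ) + 1) := by
      have : 2 * ((d:ℝ) + 1) / d * d = 2 * ((d:ℝ) + 1) := by field_simp
      rw [this] at hb
      exact hb
    have hr2 : r ^ 2 ≤ 1 := by nlinarith
    have hr1 : r ≤ 1 := by nlinarith
    exact ⟨c, fun x hx => (hle x hx).trans hr1⟩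
  have part2 : ∀ σ : Finset (EuclideanSpace ℝ (Fin d)), σ.Nonempty →
      (∃ c : EuclideanSpace ℝ (Fin d), ∀ x ∈ σ, dist x c ≤ 1) →
      ∀ x ∈ σ, ∀ y ∈ σ, dist x y ≤ 2 := by
    rintro σ _ ⟨c, hc⟩ x hx y hy
    calc dist x y ≤ dist x c + dist c y := dist_triangle _ _ _
    _ = dist x c + dist y c := by rw [dist_comm c y]
    _ ≤ 1 + 1 := add_le_add (hc x hx) (hc y hy)
    _ = 2 := by norm_num
  refine ⟨part1, part2, fun S => ⟨?_, ?_⟩⟩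
  · rintro σ ⟨hsub, hne, hdiam⟩
    exact ⟨hsub, hne, part1 σ hne hdiam⟩
  · rintro σ ⟨hsub, hne, hc⟩
    refine ⟨hsub, hne, ?_⟩
    have := part2 σ hne hc
    simpa using this
end
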